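/- arXiv:2104.09009 — 2 statements merged into one kernel-verified Lean document; each statement's English description precedes it below -/
import Mathlib

section
/- Let P be a finite poset of width two and let A, B be forward events on the set of linear extensions of P, where a forward atomic event is a set of the form {L : L(α_i) < L(β_j)} for α_i in the first chain C₁ and β_j in the second chain C₂, and a forward event is an intersection of forward atomic events. Then under the uniform probability measure on linear extensions, P[A ∩ B] ≥ P[A] · P[B]. (Graham–Yao–Yao inequality.) -/
open scoped Classical
open scoped FinsetFamily

open Finset in
private lemma gyy_downclosed_mem_iff {a : ℕ} {F : Finset (Fin a)}
    (hdc : ∀ ⦃i j : Fin a⦄, i ≤ j → j ∈ F → i ∈ F) {i : Fin a} :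
    i ∈ F ↔ (i : ℕ) < F.card := by
  constructor
  · intro hi
    have hsub : Finset.Iic i ⊆ F := fun j hj => hdc (Finset.mem_Iic.1 hj) hi
    have := Finset.card_le_card hsub
    rw [Fin.card_Iic] at this
    omega
  · intro h
    by_contra hi
    have hsub : F ⊆ Finset.Iio i := by
      intro j hj
      rcases lt_or_ge j i with h' | h'
      · exact Finset.mem_Iio.2 h'
      · exact absurd (hdc h' hj) hi
    have := Finset.card_le_card hsub
    rw [Fin.card_Iio] at this
    omega

open Finset in
private lemma gyy_key_count {n a b : ℕ} (hab : a + b = n)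
    (s : Fin a → Fin n) (t : Fin b → Fin n)
    (hs : StrictMono s) (ht : StrictMono t)
    (hst : ∀ i j, s i ≠ t j) (i : Fin a) (j : Fin b) :
    s i < t j ↔ (i : ℕ) + (j : ℕ) + 1 ≤ (t j : ℕ) := by
  classical
  set F : Finset (Fin a) := univ.filter fun i' => s i' < t j with hF
  have hdc : ∀ ⦃i' i'' : Fin a⦄, i' ≤ i'' → i'' ∈ F → i' ∈ F := by
    intro i' i'' hle h
    simp only [hF, mem_filter, mem_univ, true_and] at h ⊢
    exact lt_of_le_of_lt (hs.monotone hle) h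
  have hmem : ∀ i' : Fin a, s i' < t j ↔ (i' : ℕ) < F.card := by
    intro i'
    rw [← gyy_downclosed_mem_iff hdc]
    simp [hF]
  have hinj : Function.Injective (Sum.elim s t) := by
    rintro (p | p) (q | q) h <;>
      simp only [Sum.elim_inl, Sum.elim_inr] at h
    · exact congrArg Sum.inl (hs.injective h)
    · exact absurd h (hst p q)
    · exact absurd h.symm (hst q p)
    · exact congrArg Sum.inr (ht.injective h)
  have hsurj : Function.Surjective (Sum.elim s t) := by
    have : Function.Bijective (Sum.elim s t) :=
      (Fintype.bijective_iff_injective_and_card _).2 ⟨hinj, by simp [hab]⟩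
    exact this.2
  have hsplit : Finset.Iio (t j) = F.image s ∪ (Finset.Iio j).image t := by
    ext x
    simp only [mem_Iio, mem_union, mem_image, hF, mem_filter, mem_univ, true_and]
    constructor
    · intro hx
      obtain ⟨p, rfl⟩ := hsurj x
      cases p with
      | inl i' => exact Or.inl ⟨i', hx, rfl⟩
      | inr j' =>
        refine Or.inr ⟨j', ?_, rfl⟩
        exact ht.lt_iff_lt.1 hx
    · rintro (⟨i', hi', rfl⟩ | ⟨j', hj', rfl⟩)
      · exact hi'
      · exact ht hj'
  have hdisj2 : Disjoint (F.image s) ((Finset.Iio j).image t) := by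
    rw [Finset.disjoint_left]
    rintro x hx hx'
    obtain ⟨i', _, rfl⟩ := Finset.mem_image.1 hx
    obtain ⟨j', _, hj'⟩ := Finset.mem_image.1 hx'
    exact hst i' j' hj'.symm
  have hcount : (t j : ℕ) = F.card + (j : ℕ) := by
    have h1 : (Finset.Iio (t j)).card = (t j : ℕ) := Fin.card_Iio _
    rw [hsplit, Finset.card_union_of_disjoint hdisj2,
      Finset.card_image_of_injective _ hs.injective,
      Finset.card_image_of_injective _ ht.injective, Fin.card_Iio] at h1
    omega
  rw [hmem]
  omega

/-- Graham–Yao–Yao inequality: for a width-two poset with chain partition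
`(α, β)`, forward events (intersections of events `{L : L(α_i) < L(β_j)}`) are
positively correlated under the uniform measure on linear extensions, stated as
`#A · #B ≤ #(A ∩ B) · #𝓔(P)`. -/
theorem graham_yao_yao {X : Type*} [Fintype X] [PartialOrder X] [DecidableEq X]
    {a b : ℕ}
    (α : Fin a → X) (β : Fin b → X) (hα : StrictMono α) (hβ : StrictMono β)
    (hdisj : ∀ i j, α i ≠ β j)
    (hcover : ∀ x : X, (∃ i, α i = x) ∨ (∃ j, β j = x))
    (E A B : Finset (X ≃ Fin (Fintype.card X)))
    (hE : E = Finset.univ.filter fun L => ∀ u v : X, u < v → L u < L v)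
    (hA : ∃ s : Finset (Fin a × Fin b),
      A = E.filter fun L => ∀ p ∈ s, L (α p.1) < L (β p.2))
    (hB : ∃ s : Finset (Fin a × Fin b),
      B = E.filter fun L => ∀ p ∈ s, L (α p.1) < L (β p.2)) :
    A.card * B.card ≤ (A ∩ B).card * E.card := by
  classical
  obtain ⟨sA, hA⟩ := hA
  obtain ⟨sB, hB⟩ := hB
  have hinjαβ : Function.Injective (Sum.elim α β) := by
    rintro (p | p) (q | q) h <;> simp only [Sum.elim_inl, Sum.elim_inr] at h
    · exact congrArg Sum.inl (hα.injective h)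
    · exact absurd h (hdisj p q)
    · exact absurd h.symm (hdisj q p)
    · exact congrArg Sum.inr (hβ.injective h)
  have hsurjαβ : Function.Surjective (Sum.elim α β) := by
    intro x
    rcases hcover x with ⟨i, hi⟩ | ⟨j, hj⟩
    · exact ⟨Sum.inl i, hi⟩
    · exact ⟨Sum.inr j, hj⟩
  have hab : a + b = Fintype.card X := by
    have := Fintype.card_of_bijective (f := Sum.elim α β) ⟨hinjαβ, hsurjαβ⟩
    simpa using this
  have hEmem : ∀ L : X ≃ Fin (Fintype.card X),
      L ∈ E ↔ ∀ u v : X, u < v → L u < L v := by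
    intro L; rw [hE]; simp
  have hkey : ∀ L ∈ E, ∀ (i : Fin a) (j : Fin b),
      (L (α i) < L (β j) ↔ (i : ℕ) + (j : ℕ) + 1 ≤ (L (β j) : ℕ)) := by
    intro L hL i j
    rw [hEmem] at hL
    exact gyy_key_count hab (fun i => L (α i)) (fun j => L (β j))
      (fun i i' h => hL _ _ (hα h)) (fun j j' h => hL _ _ (hβ h))
      (fun i j h => hdisj i j (L.injective h)) i j
  have hbuild : ∀ t : Fin b → Fin (Fintype.card X), StrictMono t →
      (∀ (i : Fin a) (j : Fin b), α i < β j → (i : ℕ) + (j : ℕ) + 1 ≤ (t j : ℕ)) →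
      (∀ (i : Fin a) (j : Fin b), β j < α i → (t j : ℕ) ≤ (i : ℕ) + (j : ℕ)) →
      ∃ L ∈ E, (fun j => L (β j)) = t := by
    intro t htm hfwd hbwd
    set T : Finset (Fin (Fintype.card X)) := Finset.image t Finset.univ with hT
    have hTcard : T.card = b := by
      rw [hT, Finset.card_image_of_injective _ htm.injective, Finset.card_univ,
        Fintype.card_fin]
    have hScard : Tᶜ.card = a := by
      rw [Finset.card_compl, hTcard, Fintype.card_fin]; omega
    set s : Fin a → Fin (Fintype.card X) := ⇑(Tᶜ.orderEmbOfFin hScard) with hsdef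
    have hsm : StrictMono s := (Tᶜ.orderEmbOfFin hScard).strictMono
    have hst : ∀ i j, s i ≠ t j := by
      intro i j h
      have hmem : s i ∈ Tᶜ := Finset.orderEmbOfFin_mem _ _ _
      rw [Finset.mem_compl] at hmem
      exact hmem (h ▸ Finset.mem_image_of_mem t (Finset.mem_univ j))
    have hinj : Function.Injective (Sum.elim s t) := by
      rintro (p | p) (q | q) h <;> simp only [Sum.elim_inl, Sum.elim_inr] at h
      · exact congrArg Sum.inl (hsm.injective h)
      · exact absurd h (hst p q)
      · exact absurd h.symm (hst q p)
      · exact congrArg Sum.inr (htm.injective h)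
    have hbij2 : Function.Bijective (Sum.elim s t) :=
      (Fintype.bijective_iff_injective_and_card _).2 ⟨hinj, by simp [hab]⟩
    let e : Fin a ⊕ Fin b ≃ X := Equiv.ofBijective _ ⟨hinjαβ, hsurjαβ⟩
    let g : Fin a ⊕ Fin b ≃ Fin (Fintype.card X) := Equiv.ofBijective _ hbij2
    have heα : ∀ i, e.symm (α i) = Sum.inl i := by
      intro i; rw [Equiv.symm_apply_eq]; rfl
    have heβ : ∀ j, e.symm (β j) = Sum.inr j := by
      intro j; rw [Equiv.symm_apply_eq]; rfl
    refine ⟨e.symm.trans g, ?_, ?_⟩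
    · rw [hEmem]
      intro u v huv
      obtain ⟨p, rfl⟩ := hsurjαβ u
      obtain ⟨q, rfl⟩ := hsurjαβ v
      cases p with
      | inl i =>
        cases q with
        | inl i' =>
          simp only [Sum.elim_inl] at huv ⊢
          simp only [Equiv.trans_apply, heα]
          exact hsm (hα.lt_iff_lt.1 huv)
        | inr j =>
          simp only [Sum.elim_inl, Sum.elim_inr] at huv ⊢
          simp only [Equiv.trans_apply, heα, heβ]
          exact (gyy_key_count hab s t hsm htm hst i j).2 (hfwd i j huv)
      | inr j =>
        cases q with
        | inl i =>
          simp only [Sum.elim_inl, Sum.elim_inr] at huv ⊢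
          simp only [Equiv.trans_apply, heα, heβ]
          have h1 : ¬ s i < t j := by
            rw [gyy_key_count hab s t hsm htm hst i j]
            have := hbwd i j huv
            omega
          exact lt_of_le_of_ne (le_of_not_gt h1) (Ne.symm (hst i j))
        | inr j' =>
          simp only [Sum.elim_inr] at huv ⊢
          simp only [Equiv.trans_apply, heβ]
          exact htm (hβ.lt_iff_lt.1 huv)
    · funext j
      simp only [Equiv.trans_apply, heβ]
      rfl
  set Φ : (X ≃ Fin (Fintype.card X)) → (Fin b → Fin (Fintype.card X)) :=
    fun L j => L (β j) with hΦ
  have hΦapp : ∀ (L : X ≃ Fin (Fintype.card X)) (j : Fin b), Φ L j = L (β j) := by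
    intro L j; rw [hΦ]
  have hΦinj : Set.InjOn Φ E := by
    intro L hL M hM h
    have hLE := (hEmem L).1 hL
    have hME := (hEmem M).1 hM
    have hsmL : StrictMono fun i => L (α i) := fun i i' hi => hLE _ _ (hα hi)
    have hsmM : StrictMono fun i => M (α i) := fun i i' hi => hME _ _ (hα hi)
    have hrange : ∀ N : X ≃ Fin (Fintype.card X),
        Set.range (fun i => N (α i)) = {x | x ∉ Set.range fun j => N (β j)} := by
      intro N
      ext x
      constructor
      · rintro ⟨i, rfl⟩ ⟨j, hj⟩
        exact hdisj i j (N.injective hj.symm)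
      · intro hx
        obtain ⟨p, hp⟩ := hsurjαβ (N.symm x)
        cases p with
        | inl i =>
          refine ⟨i, ?_⟩
          simp only [Sum.elim_inl] at hp
          show N (α i) = x
          rw [hp, Equiv.apply_symm_apply]
        | inr j =>
          exfalso
          apply hx
          refine ⟨j, ?_⟩
          simp only [Sum.elim_inr] at hp
          show N (β j) = x
          rw [hp, Equiv.apply_symm_apply]
    have hreq : Set.range (fun i => L (α i)) = Set.range fun i => M (α i) := by
      rw [hrange L, hrange M]
      have hLM : (fun j => L (β j)) = fun j => M (β j) := h
      rw [hLM]
    haveI : WellFoundedLT (Fin a) := inferInstance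
    have hαeq : (fun i => L (α i)) = fun i => M (α i) :=
      (hsmL.range_inj hsmM).1 hreq
    apply Equiv.coe_fn_injective
    funext x
    obtain ⟨p, rfl⟩ := hsurjαβ x
    cases p with
    | inl i => exact congrFun hαeq i
    | inr j => exact congrFun h j
  have hAE : A ⊆ E := by rw [hA]; exact Finset.filter_subset _ _
  have hBE : B ⊆ E := by rw [hB]; exact Finset.filter_subset _ _
  have hmemE : ∀ L ∈ E, ∀ (i : Fin a) (j : Fin b),
      (α i < β j → (i : ℕ) + (j : ℕ) + 1 ≤ (Φ L j : ℕ)) ∧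
      (β j < α i → (Φ L j : ℕ) ≤ (i : ℕ) + (j : ℕ)) := by
    intro L hL i j
    have hLE := (hEmem L).1 hL
    rw [hΦapp]
    constructor
    · intro hij
      exact (hkey L hL i j).1 (hLE _ _ hij)
    · intro hij
      have h1 : ¬ L (α i) < L (β j) := asymm (hLE _ _ hij)
      rw [hkey L hL i j] at h1
      omega
  have hΦmono : ∀ L ∈ E, StrictMono (Φ L) := by
    intro L hL j j' hj
    rw [hΦapp, hΦapp]
    exact (hEmem L).1 hL _ _ (hβ hj)
  have hsups : (A.image Φ) ⊻ (B.image Φ) ⊆ (A ∩ B).image Φ := by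
    intro x hx
    rw [Finset.mem_sups] at hx
    obtain ⟨x1, hx1, x2, hx2, rfl⟩ := hx
    obtain ⟨L, hLA, rfl⟩ := Finset.mem_image.1 hx1
    obtain ⟨M, hMB, rfl⟩ := Finset.mem_image.1 hx2
    have hLE : L ∈ E := hAE hLA
    have hME : M ∈ E := hBE hMB
    have hval : ∀ j, ((Φ L ⊔ Φ M) j : ℕ) = max (Φ L j : ℕ) (Φ M j : ℕ) := by
      intro j
      rcases le_total (Φ L j) (Φ M j) with h | h
      · rw [Pi.sup_apply, sup_eq_right.2 h, Nat.max_eq_right (Fin.le_def.1 h)]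
      · rw [Pi.sup_apply, sup_eq_left.2 h, Nat.max_eq_left (Fin.le_def.1 h)]
    have htm : StrictMono (Φ L ⊔ Φ M) := by
      intro j j' hj
      rw [Fin.lt_def, hval, hval]
      have h1 := Fin.lt_def.1 (hΦmono L hLE hj)
      have h2 := Fin.lt_def.1 (hΦmono M hME hj)
      omega
    have hfwd : ∀ (i : Fin a) (j : Fin b), α i < β j →
        (i : ℕ) + (j : ℕ) + 1 ≤ ((Φ L ⊔ Φ M) j : ℕ) := by
      intro i j hij
      rw [hval]
      have := (hmemE L hLE i j).1 hij
      omega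
    have hbwd : ∀ (i : Fin a) (j : Fin b), β j < α i →
        ((Φ L ⊔ Φ M) j : ℕ) ≤ (i : ℕ) + (j : ℕ) := by
      intro i j hij
      rw [hval]
      have h1 := (hmemE L hLE i j).2 hij
      have h2 := (hmemE M hME i j).2 hij
      omega
    obtain ⟨N, hNE, hNt⟩ := hbuild (Φ L ⊔ Φ M) htm hfwd hbwd
    have hNΦ : Φ N = Φ L ⊔ Φ M := by rw [hΦ]; exact hNt
    refine Finset.mem_image.2 ⟨N, Finset.mem_inter.2 ⟨?_, ?_⟩, hNΦ⟩
    · rw [hA, Finset.mem_filter]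
      refine ⟨hNE, fun p hp => ?_⟩
      rw [hkey N hNE p.1 p.2]
      have h1 : (p.1 : ℕ) + (p.2 : ℕ) + 1 ≤ (Φ L p.2 : ℕ) := by
        rw [hA, Finset.mem_filter] at hLA
        rw [hΦapp]
        exact (hkey L hLE p.1 p.2).1 (hLA.2 p hp)
      have h2 : ((N (β p.2)) : ℕ) = ((Φ L ⊔ Φ M) p.2 : ℕ) := by
        rw [← hNΦ, hΦapp]
      rw [h2, hval]
      omega
    · rw [hB, Finset.mem_filter]
      refine ⟨hNE, fun p hp => ?_⟩
      rw [hkey N hNE p.1 p.2]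
      have h1 : (p.1 : ℕ) + (p.2 : ℕ) + 1 ≤ (Φ M p.2 : ℕ) := by
        rw [hB, Finset.mem_filter] at hMB
        rw [hΦapp]
        exact (hkey M hME p.1 p.2).1 (hMB.2 p hp)
      have h2 : ((N (β p.2)) : ℕ) = ((Φ L ⊔ Φ M) p.2 : ℕ) := by
        rw [← hNΦ, hΦapp]
      rw [h2, hval]
      omega
  have hinfs : (A.image Φ) ⊼ (B.image Φ) ⊆ E.image Φ := by
    intro x hx
    rw [Finset.mem_infs] at hx
    obtain ⟨x1, hx1, x2, hx2, rfl⟩ := hx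
    obtain ⟨L, hLA, rfl⟩ := Finset.mem_image.1 hx1
    obtain ⟨M, hMB, rfl⟩ := Finset.mem_image.1 hx2
    have hLE : L ∈ E := hAE hLA
    have hME : M ∈ E := hBE hMB
    have hval : ∀ j, ((Φ L ⊓ Φ M) j : ℕ) = min (Φ L j : ℕ) (Φ M j : ℕ) := by
      intro j
      rcases le_total (Φ L j) (Φ M j) with h | h
      · rw [Pi.inf_apply, inf_eq_left.2 h, Nat.min_eq_left (Fin.le_def.1 h)]
      · rw [Pi.inf_apply, inf_eq_right.2 h, Nat.min_eq_right (Fin.le_def.1 h)]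
    have htm : StrictMono (Φ L ⊓ Φ M) := by
      intro j j' hj
      rw [Fin.lt_def, hval, hval]
      have h1 := Fin.lt_def.1 (hΦmono L hLE hj)
      have h2 := Fin.lt_def.1 (hΦmono M hME hj)
      omega
    have hfwd : ∀ (i : Fin a) (j : Fin b), α i < β j →
        (i : ℕ) + (j : ℕ) + 1 ≤ ((Φ L ⊓ Φ M) j : ℕ) := by
      intro i j hij
      rw [hval]
      have h1 := (hmemE L hLE i j).1 hij
      have h2 := (hmemE M hME i j).1 hij
      omega
    have hbwd : ∀ (i : Fin a) (j : Fin b), β j < α i →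
        ((Φ L ⊓ Φ M) j : ℕ) ≤ (i : ℕ) + (j : ℕ) := by
      intro i j hij
      rw [hval]
      have h1 := (hmemE L hLE i j).2 hij
      omega
    obtain ⟨N, hNE, hNt⟩ := hbuild (Φ L ⊓ Φ M) htm hfwd hbwd
    refine Finset.mem_image.2 ⟨N, hNE, ?_⟩
    rw [hΦ]; exact hNt
  have hcardA : (A.image Φ).card = A.card :=
    Finset.card_image_of_injOn (hΦinj.mono (Finset.coe_subset.2 hAE))
  have hcardB : (B.image Φ).card = B.card :=
    Finset.card_image_of_injOn (hΦinj.mono (Finset.coe_subset.2 hBE))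
  have hdaykin := Finset.le_card_infs_mul_card_sups (A.image Φ) (B.image Φ)
  have h1 : ((A.image Φ) ⊻ (B.image Φ)).card ≤ (A ∩ B).card :=
    le_trans (Finset.card_le_card hsups) Finset.card_image_le
  have h2 : ((A.image Φ) ⊼ (B.image Φ)).card ≤ E.card :=
    le_trans (Finset.card_le_card hinfs) Finset.card_image_le
  calc A.card * B.card = (A.image Φ).card * (B.image Φ).card := by
        rw [hcardA, hcardB]
    _ ≤ ((A.image Φ) ⊼ (B.image Φ)).card * ((A.image Φ) ⊻ (B.image Φ)).card := hdaykin
    _ ≤ E.card * (A ∩ B).card := Nat.mul_le_mul h2 h1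
    _ = (A ∩ B).card * E.card := Nat.mul_comm _ _
end

section
/- Positive correlation of atomic events extends to intersections: let 𝓔 be a finite set (of linear extensions) and suppose that for every poset P' obtained from P by adding relations (i.e., every induced restriction of the uniform measure to a downward-compatible sub-collection of linear extensions which is itself the set of linear extensions of a width-two poset), every pair of forward atomic events is positively correlated. Then every pair of forward events (finite intersections of forward atomic events) on P is positively correlated: P[A₁ ∩ ... ∩ A_k ∩ B₁ ∩ ... ∩ B_ℓ] ≥ P[A₁ ∩ ... ∩ A_k] · P[B₁ ∩ ... ∩ B_ℓ]. -/
open scoped Classical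

/-- Positive correlation of forward atomic events extends to forward events
(finite intersections of atomic events). Adding a set `S` of forward relations
to the width-two poset `P` yields the poset `P'` whose linear extensions are
exactly the elements of `E` satisfying the constraints in `S`; the hypothesis
states that on every such `P'` each pair of forward atomic events is positively
correlated, and the conclusion is positive correlation for arbitrary forward
events on `P`. -/
theorem forward_events_positively_correlated
    {X : Type*} [Fintype X] [PartialOrder X] [DecidableEq X] {a b : ℕ}
    (α : Fin a → X) (β : Fin b → X) (hα : StrictMono α) (hβ : StrictMono β)
    (hdisj : ∀ i j, α i ≠ β j)
    (hcover : ∀ x : X, (∃ i, α i = x) ∨ (∃ j, β j = x))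
    (E : Finset (X ≃ Fin (Fintype.card X)))
    (hE : E = Finset.univ.filter fun L => ∀ u v : X, u < v → L u < L v)
    (Hatomic : ∀ (S : Finset (Fin a × Fin b)) (p q : Fin a × Fin b),
      ((E.filter fun L => ∀ r ∈ S, L (α r.1) < L (β r.2)).filter
          fun L => L (α p.1) < L (β p.2)).card *
        ((E.filter fun L => ∀ r ∈ S, L (α r.1) < L (β r.2)).filter
          fun L => L (α q.1) < L (β q.2)).card ≤
      ((E.filter fun L => ∀ r ∈ S, L (α r.1) < L (β r.2)).filter
          fun L => L (α p.1) < L (β p.2) ∧ L (α q.1) < L (β q.2)).card *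
        (E.filter fun L => ∀ r ∈ S, L (α r.1) < L (β r.2)).card)
    (S₁ S₂ : Finset (Fin a × Fin b)) :
    (E.filter fun L => ∀ r ∈ S₁, L (α r.1) < L (β r.2)).card *
      (E.filter fun L => ∀ r ∈ S₂, L (α r.1) < L (β r.2)).card ≤
    (E.filter fun L => (∀ r ∈ S₁, L (α r.1) < L (β r.2)) ∧
        (∀ r ∈ S₂, L (α r.1) < L (β r.2))).card * E.card := by
  classical
  set N : Finset (Fin a × Fin b) → ℕ :=
    fun S => (E.filter fun L => ∀ r ∈ S, L (α r.1) < L (β r.2)).card with hN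
  have hmono : ∀ {S T : Finset (Fin a × Fin b)}, S ⊆ T → N T ≤ N S := by
    intro S T hST
    apply Finset.card_le_card
    intro L hL
    simp only [Finset.mem_filter] at hL ⊢
    exact ⟨hL.1, fun r hr => hL.2 r (hST hr)⟩
  have key : ∀ (S : Finset (Fin a × Fin b)) (p q : Fin a × Fin b),
      N (insert p S) * N (insert q S) ≤ N (insert q (insert p S)) * N S := by
    intro S p q
    have h := Hatomic S p q
    have e1 : (E.filter fun L => ∀ r ∈ S, L (α r.1) < L (β r.2)).filter
        (fun L => L (α p.1) < L (β p.2)) =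
        E.filter fun L => ∀ r ∈ insert p S, L (α r.1) < L (β r.2) := by
      ext L
      simp only [Finset.mem_filter, Finset.forall_mem_insert]
      tauto
    have e2 : (E.filter fun L => ∀ r ∈ S, L (α r.1) < L (β r.2)).filter
        (fun L => L (α q.1) < L (β q.2)) =
        E.filter fun L => ∀ r ∈ insert q S, L (α r.1) < L (β r.2) := by
      ext L
      simp only [Finset.mem_filter, Finset.forall_mem_insert]
      tauto
    have e3 : (E.filter fun L => ∀ r ∈ S, L (α r.1) < L (β r.2)).filter
        (fun L => L (α p.1) < L (β p.2) ∧ L (α q.1) < L (β q.2)) =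
        E.filter fun L => ∀ r ∈ insert q (insert p S), L (α r.1) < L (β r.2) := by
      ext L
      simp only [Finset.mem_filter, Finset.forall_mem_insert]
      tauto
    rw [e1, e2, e3] at h
    simp only [hN]
    exact h
  have lem1 : ∀ (B : Finset (Fin a × Fin b)) (q : Fin a × Fin b)
      (S : Finset (Fin a × Fin b)),
      N (S ∪ B) * N (insert q B) ≤ N (insert q (S ∪ B)) * N B := by
    intro B q S
    induction S using Finset.induction_on with
    | empty => simp [Nat.mul_comm]
    | @insert p S' hp IH =>
      rw [Finset.insert_union]
      rcases Nat.eq_zero_or_pos (N (S' ∪ B)) with h0 | h0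
      · have hz : N (insert p (S' ∪ B)) = 0 :=
          Nat.le_zero.mp (h0 ▸ hmono (Finset.subset_insert _ _))
        simp [hz]
      · have hk := key (S' ∪ B) p q
        have h3 : N (S' ∪ B) * (N (insert p (S' ∪ B)) * N (insert q B)) ≤
            N (S' ∪ B) * (N (insert q (insert p (S' ∪ B))) * N B) := by
          calc N (S' ∪ B) * (N (insert p (S' ∪ B)) * N (insert q B))
              = N (insert p (S' ∪ B)) * (N (S' ∪ B) * N (insert q B)) := by ring
            _ ≤ N (insert p (S' ∪ B)) * (N (insert q (S' ∪ B)) * N B) :=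
                Nat.mul_le_mul le_rfl IH
            _ = (N (insert p (S' ∪ B)) * N (insert q (S' ∪ B))) * N B := by ring
            _ ≤ (N (insert q (insert p (S' ∪ B))) * N (S' ∪ B)) * N B :=
                Nat.mul_le_mul hk le_rfl
            _ = N (S' ∪ B) * (N (insert q (insert p (S' ∪ B))) * N B) := by ring
        exact Nat.le_of_mul_le_mul_left h3 h0
  have lem2 : ∀ (B S T : Finset (Fin a × Fin b)),
      N (S ∪ B) * N (T ∪ B) ≤ N (S ∪ T ∪ B) * N B := by
    intro B S T
    induction T using Finset.induction_on with
    | empty => simp [Nat.mul_comm]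
    | @insert q T' hq IH =>
      have e1 : insert q T' ∪ B = insert q (T' ∪ B) := Finset.insert_union _ _ _
      have e2 : S ∪ insert q T' ∪ B = insert q (S ∪ T' ∪ B) := by
        rw [Finset.union_insert, Finset.insert_union]
      rw [e1, e2]
      rcases Nat.eq_zero_or_pos (N (T' ∪ B)) with h0 | h0
      · have hz : N (insert q (T' ∪ B)) = 0 :=
          Nat.le_zero.mp (h0 ▸ hmono (Finset.subset_insert _ _))
        simp [hz]
      · rcases Nat.eq_zero_or_pos (N (S ∪ T' ∪ B)) with h1 | h1
        · have hS : N (S ∪ B) = 0 := by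
            have := IH
            rw [h1, Nat.zero_mul, Nat.le_zero, Nat.mul_eq_zero] at this
            rcases this with h | h
            · exact h
            · omega
          simp [hS]
        · have hl1 := lem1 (T' ∪ B) q S
          have e3 : S ∪ (T' ∪ B) = S ∪ T' ∪ B := (Finset.union_assoc _ _ _).symm
          rw [e3] at hl1
          have h3 : N (T' ∪ B) * (N (S ∪ B) * N (insert q (T' ∪ B))) ≤
              N (T' ∪ B) * (N (insert q (S ∪ T' ∪ B)) * N B) := by
            calc N (T' ∪ B) * (N (S ∪ B) * N (insert q (T' ∪ B)))
                = (N (S ∪ B) * N (T' ∪ B)) * N (insert q (T' ∪ B)) := by ring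
              _ ≤ (N (S ∪ T' ∪ B) * N B) * N (insert q (T' ∪ B)) :=
                  Nat.mul_le_mul IH le_rfl
              _ = (N (S ∪ T' ∪ B) * N (insert q (T' ∪ B))) * N B := by ring
              _ ≤ (N (insert q (S ∪ T' ∪ B)) * N (T' ∪ B)) * N B :=
                  Nat.mul_le_mul hl1 le_rfl
              _ = N (T' ∪ B) * (N (insert q (S ∪ T' ∪ B)) * N B) := by ring
          exact Nat.le_of_mul_le_mul_left h3 h0
  have final := lem2 ∅ S₁ S₂
  simp only [Finset.union_empty] at final
  have eN : N ∅ = E.card := by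
    simp [hN]
  have eU : (E.filter fun L => (∀ r ∈ S₁, L (α r.1) < L (β r.2)) ∧
      (∀ r ∈ S₂, L (α r.1) < L (β r.2))) =
      E.filter fun L => ∀ r ∈ S₁ ∪ S₂, L (α r.1) < L (β r.2) := by
    ext L
    simp only [Finset.mem_filter, Finset.mem_union]
    constructor
    · rintro ⟨h1, h2, h3⟩
      exact ⟨h1, fun r hr => hr.elim (h2 r) (h3 r)⟩
    · rintro ⟨h1, h2⟩
      exact ⟨h1, fun r hr => h2 r (Or.inl hr), fun r hr => h2 r (Or.inr hr)⟩
  rw [eN] at final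
  calc (E.filter fun L => ∀ r ∈ S₁, L (α r.1) < L (β r.2)).card *
        (E.filter fun L => ∀ r ∈ S₂, L (α r.1) < L (β r.2)).card
      = N S₁ * N S₂ := rfl
    _ ≤ N (S₁ ∪ S₂) * E.card := final
    _ = _ := by rw [eU]
end
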